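/- If a density matrix ρ satisfies tr(Π_k ρ) = 1 for some k ∈ {C,1,2,3}, then S_j ρ = ρ S_j = ε_{jk} ρ for each j ∈ {1,2,3}, where ε_{jk} ∈ {−1, +1} is the eigenvalue of S_j on the range of Π_k; consequently D_{S_j}(ρ) = 0 and M_{S_j}(ρ) := S_jρ + ρS_j − 2 tr(S_jρ)ρ = 0 for all j, so ρ is a steady state of the open-loop measurement dynamics. -/

import Mathlib

open Matrix Finset
open scoped ComplexOrder

noncomputable section

/-- 8×8 complex matrices, the three-qubit space with basis `|abc⟩ ↦ 4a+2b+c`. -/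
abbrev M8 := Matrix (Fin 8) (Fin 8) ℂ

/-- Pauli-z on qubit 1: `σz ⊗ I2 ⊗ I2`. -/
def Z1 : M8 := Matrix.diagonal fun i => (-1 : ℂ) ^ (i.val / 4)
/-- Pauli-z on qubit 2: `I2 ⊗ σz ⊗ I2`. -/
def Z2 : M8 := Matrix.diagonal fun i => (-1 : ℂ) ^ (i.val / 2 % 2)
/-- Pauli-z on qubit 3: `I2 ⊗ I2 ⊗ σz`. -/
def Z3 : M8 := Matrix.diagonal fun i => (-1 : ℂ) ^ (i.val % 2)

/-- Pauli-x on qubit `j` (j = 0,1,2 for qubits 1,2,3): flips the corresponding bit. -/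
def X (j : Fin 3) : M8 := fun i k => if i.val ^^^ k.val = 2 ^ (2 - j.val) then 1 else 0

/-- The syndrome operators S1 = Z2 Z3, S2 = Z1 Z3, S3 = Z1 Z2, indexed by Fin 3. -/
def S : Fin 3 → M8 := ![Z2 * Z3, Z1 * Z3, Z1 * Z2]

/-- Projector onto the nominal code space. -/
def PiC : M8 := (4 : ℂ)⁻¹ • ((1 : M8) + S 0 + S 1 + S 2)

/-- The four syndrome-space projectors: `P 0 = Π_C`, `P j.succ = Π_j = X_j Π_C X_j`. -/
def P : Fin 4 → M8 := ![PiC, X 0 * PiC * X 0, X 1 * PiC * X 1, X 2 * PiC * X 2]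

/-- Lindblad dissipator `D_L(ρ) = LρL† − (1/2)(L†Lρ + ρL†L)`. -/
def Dissip {n : ℕ} (L ρ : Matrix (Fin n) (Fin n) ℂ) : Matrix (Fin n) (Fin n) ℂ :=
  L * ρ * Lᴴ - (2 : ℂ)⁻¹ • (Lᴴ * L * ρ + ρ * (Lᴴ * L))

/-- Measurement backaction `M_L(ρ) = Lρ + ρL† − tr(ρ(L+L†))ρ` for Hermitian `L`. -/
def Back {n : ℕ} (L ρ : Matrix (Fin n) (Fin n) ℂ) : Matrix (Fin n) (Fin n) ℂ :=
  L * ρ + ρ * L - (2 * (L * ρ).trace) • ρ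

/-- Sign `ε_{j,a}`: eigenvalue of `S j` on the range of `P a`
(`+1` on Π_C and on Π_{j}, `−1` otherwise). -/
def eps (j : Fin 3) (a : Fin 4) : ℂ := if a.val = 0 ∨ a.val = j.val + 1 then 1 else -1

end

/- ### Auxiliary material -/

noncomputable section Aux

@[local simp] lemma cons_val_five' (a₀ a₁ a₂ a₃ a₄ a₅ a₆ a₇ : ℂ) :
    ![a₀,a₁,a₂,a₃,a₄,a₅,a₆,a₇] 5 = a₅ := rfl
@[local simp] lemma cons_val_six' (a₀ a₁ a₂ a₃ a₄ a₅ a₆ a₇ : ℂ) :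
    ![a₀,a₁,a₂,a₃,a₄,a₅,a₆,a₇] 6 = a₆ := rfl
@[local simp] lemma cons_val_seven' (a₀ a₁ a₂ a₃ a₄ a₅ a₆ a₇ : ℂ) :
    ![a₀,a₁,a₂,a₃,a₄,a₅,a₆,a₇] 7 = a₇ := rfl

/-- Diagonal entries of the syndrome operators. -/
def sg : Fin 3 → Fin 8 → ℂ :=
  ![![1,-1,-1,1,1,-1,-1,1], ![1,-1,1,-1,-1,1,-1,1], ![1,1,-1,-1,-1,-1,1,1]]

/-- Diagonal entries of the four projectors. -/
def pv : Fin 4 → Fin 8 → ℂ :=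
  ![![1,0,0,0,0,0,0,1], ![0,0,0,1,1,0,0,0], ![0,0,1,0,0,1,0,0], ![0,1,0,0,0,0,1,0]]

lemma S_eq (j : Fin 3) : S j = Matrix.diagonal (sg j) := by
  have key : ∀ (A B : M8) (dA dB : Fin 8 → ℂ), A = Matrix.diagonal dA → B = Matrix.diagonal dB →
      ∀ d : Fin 8 → ℂ, (∀ i, dA i * dB i = d i) → A * B = Matrix.diagonal d := by
    rintro A B dA dB rfl rfl d hd
    rw [Matrix.diagonal_mul_diagonal, Matrix.diagonal_eq_diagonal_iff]
    exact hd
  fin_cases j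
  · exact key Z2 Z3 _ _ rfl rfl _ (by intro i; fin_cases i <;> norm_num [Z2, Z3, sg])
  · exact key Z1 Z3 _ _ rfl rfl _ (by intro i; fin_cases i <;> norm_num [Z1, Z3, sg])
  · exact key Z1 Z2 _ _ rfl rfl _ (by intro i; fin_cases i <;> norm_num [Z1, Z2, sg])

lemma PiC_eq : PiC = Matrix.diagonal (pv 0) := by
  rw [PiC, S_eq 0, S_eq 1, S_eq 2, ← Matrix.diagonal_one, Matrix.diagonal_add,
    Matrix.diagonal_add, Matrix.diagonal_add, ← Matrix.diagonal_smul,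
    Matrix.diagonal_eq_diagonal_iff]
  intro i; fin_cases i <;> norm_num [sg, pv, Matrix.vecHead, Matrix.vecTail, Matrix.cons_val_two]

set_option maxHeartbeats 2000000 in
lemma P_eq (a : Fin 4) : P a = Matrix.diagonal (pv a) := by
  fin_cases a
  · exact PiC_eq
  on_goal 1 => show X 0 * PiC * X 0 = _
  on_goal 2 => show X 1 * PiC * X 1 = _
  on_goal 3 => show X 2 * PiC * X 2 = _
  all_goals
    rw [PiC_eq]
    ext i l
    fin_cases i <;> fin_cases l <;>
      simp (config := { decide := true }) [X, Matrix.mul_apply, Matrix.diagonal,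
        Fin.sum_univ_eight, pv]

lemma SP (j : Fin 3) (a : Fin 4) : S j * P a = eps j a • P a := by
  rw [S_eq, P_eq, Matrix.diagonal_mul_diagonal, ← Matrix.diagonal_smul,
    Matrix.diagonal_eq_diagonal_iff]
  intro i
  fin_cases j <;> fin_cases a <;> fin_cases i <;>
    norm_num [sg, pv, eps, Matrix.vecHead, Matrix.vecTail]

lemma PS (j : Fin 3) (a : Fin 4) : P a * S j = eps j a • P a := by
  rw [S_eq, P_eq, Matrix.diagonal_mul_diagonal, ← Matrix.diagonal_smul,
    Matrix.diagonal_eq_diagonal_iff]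
  intro i
  fin_cases j <;> fin_cases a <;> fin_cases i <;>
    norm_num [sg, pv, eps, Matrix.vecHead, Matrix.vecTail]

lemma P_idem (a : Fin 4) : P a * P a = P a := by
  rw [P_eq, Matrix.diagonal_mul_diagonal, Matrix.diagonal_eq_diagonal_iff]
  intro i; fin_cases a <;> fin_cases i <;> norm_num [pv, Matrix.vecHead, Matrix.vecTail]

lemma P_herm (a : Fin 4) : (P a)ᴴ = P a := by
  rw [P_eq, Matrix.diagonal_conjTranspose, Matrix.diagonal_eq_diagonal_iff]
  intro i; fin_cases a <;> fin_cases i <;> simp [pv, Matrix.vecHead, Matrix.vecTail]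

lemma S_herm (j : Fin 3) : (S j)ᴴ = S j := by
  rw [S_eq, Matrix.diagonal_conjTranspose, Matrix.diagonal_eq_diagonal_iff]
  intro i; fin_cases j <;> fin_cases i <;> simp [sg, Matrix.vecHead, Matrix.vecTail]

lemma S_sq (j : Fin 3) : S j * S j = 1 := by
  rw [S_eq, Matrix.diagonal_mul_diagonal, ← Matrix.diagonal_one,
    Matrix.diagonal_eq_diagonal_iff]
  intro i; fin_cases j <;> fin_cases i <;> norm_num [sg, Matrix.vecHead, Matrix.vecTail]

lemma eps_sq (j : Fin 3) (a : Fin 4) : eps j a * eps j a = 1 := by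
  unfold eps; split <;> norm_num

/-- A matrix with `tr (A Aᴴ) = 0` is zero. -/
lemma eq_zero_of_trace_mul_conjTranspose_self {A : M8} (h : (A * Aᴴ).trace = 0) : A = 0 := by
  have key : ∀ i, (A * Aᴴ) i i = dotProduct (A i) (star (A i)) := fun i => by
    simp [Matrix.mul_apply, dotProduct, Matrix.conjTranspose_apply]
  have nonneg : ∀ i ∈ univ, (0:ℂ) ≤ (A * Aᴴ) i i := fun i _ => by
    rw [key]; exact Finset.sum_nonneg fun j _ => mul_star_self_nonneg _
  rw [Matrix.trace] at h
  simp only [Matrix.diag] at h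
  have diag0 := (Finset.sum_eq_zero_iff_of_nonneg nonneg).1 h
  ext i j
  have hrow : A i = 0 :=
    dotProduct_self_star_eq_zero.mp ((key i).symm.trans (diag0 i (mem_univ i)))
  simpa using congrFun hrow j

end Aux

/-- a density matrix fully supported on one syndrome subspace is a
steady state of the open-loop measurement dynamics. -/
theorem supported_state_is_steady (ρ : M8) (hρ : ρ.PosSemidef) (hτ : ρ.trace = 1)
    (k : Fin 4) (hk : (P k * ρ).trace = 1) :
    ∀ j : Fin 3,
      S j * ρ = eps j k • ρ ∧ ρ * S j = eps j k • ρ ∧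
      Dissip (S j) ρ = 0 ∧ Back (S j) ρ = 0 := by
  -- the complement projector
  have hQherm : ((1 : M8) - P k)ᴴ = 1 - P k := by
    rw [Matrix.conjTranspose_sub, Matrix.conjTranspose_one, P_herm]
  have hQidem : ((1 : M8) - P k) * (1 - P k) = 1 - P k := by
    rw [Matrix.sub_mul, one_mul, Matrix.mul_sub, mul_one, P_idem]
    abel
  have hQtr : (((1 : M8) - P k) * ρ).trace = 0 := by
    rw [Matrix.sub_mul, one_mul, Matrix.trace_sub, hτ, hk, sub_self]
  -- the square root of ρ
  open scoped MatrixOrder in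
  obtain ⟨R, hRsa, -, hRR⟩ := CFC.exists_sqrt_of_isSelfAdjoint_of_quasispectrumRestricts
    (sub_zero ρ ▸ hρ.nonneg : 0 ≤ ρ).isSelfAdjoint
    (QuasispectrumRestricts.nnreal_of_nonneg hρ.nonneg)
  have hRherm : Rᴴ = R := hRsa
  set B := ((1 : M8) - P k) * R with hB
  have hBB : B * Bᴴ = ((1 : M8) - P k) * ρ * (1 - P k) := by
    rw [hB, Matrix.conjTranspose_mul, hRherm, hQherm, ← Matrix.mul_assoc,
      Matrix.mul_assoc _ R R, hRR]
  have htrB : (B * Bᴴ).trace = 0 := by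
    rw [hBB, Matrix.trace_mul_cycle, hQidem, hQtr]
  have hB0 : B = 0 := eq_zero_of_trace_mul_conjTranspose_self htrB
  have hQρ : ((1 : M8) - P k) * ρ = 0 := by
    have : B * R = ((1 : M8) - P k) * ρ := by rw [hB, Matrix.mul_assoc, hRR]
    rw [← this, hB0, Matrix.zero_mul]
  have hPρ : P k * ρ = ρ := by
    have h' : ρ - P k * ρ = 0 := by
      rw [← hQρ, Matrix.sub_mul, one_mul]
    have := sub_eq_zero.mp h'
    exact this.symm
  have hρP : ρ * P k = ρ := by
    have h1 : (P k * ρ)ᴴ = ρ * P k := by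
      rw [Matrix.conjTranspose_mul, P_herm, hρ.1]
    rw [← h1, hPρ, hρ.1]
  intro j
  have h1 : S j * ρ = eps j k • ρ := by
    calc S j * ρ = S j * (P k * ρ) := by rw [hPρ]
      _ = (S j * P k) * ρ := by rw [Matrix.mul_assoc]
      _ = (eps j k • P k) * ρ := by rw [SP]
      _ = eps j k • (P k * ρ) := by rw [Matrix.smul_mul]
      _ = eps j k • ρ := by rw [hPρ]
  have h2 : ρ * S j = eps j k • ρ := by
    calc ρ * S j = (ρ * P k) * S j := by rw [hρP]
      _ = ρ * (P k * S j) := by rw [Matrix.mul_assoc]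
      _ = ρ * (eps j k • P k) := by rw [PS]
      _ = eps j k • (ρ * P k) := by rw [Matrix.mul_smul]
      _ = eps j k • ρ := by rw [hρP]
  refine ⟨h1, h2, ?_, ?_⟩
  · rw [Dissip, S_herm, S_sq, one_mul, mul_one, h1, Matrix.smul_mul, h2, smul_smul,
      eps_sq, one_smul]
    have : ρ + ρ = (2 : ℂ) • ρ := (two_smul ℂ ρ).symm
    rw [this, smul_smul]
    norm_num
  · have htrS : (S j * ρ).trace = eps j k := by
      rw [h1, Matrix.trace_smul, hτ, smul_eq_mul, mul_one]
    rw [Back, htrS, h1, h2, ← add_smul, ← sub_smul,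
      show eps j k + eps j k - 2 * eps j k = 0 by ring, zero_smul]
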